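/- If r(x) > 0 on an interval between two consecutive zeros of f' containing a zero x* of f, then h(x) = f(x)/f'(x) satisfies h'(x*) = 1, h(x) < 0 for x ∈ (x', x*), and h(x) > 0 for x ∈ (x*, x''). -/

import Mathlib

lemma same_sign_aux (g : ℝ → ℝ) (hcg : Continuous g) (a b : ℝ)
    (h : ∀ x ∈ Set.Ioo a b, g x ≠ 0) (y z : ℝ)
    (hy : y ∈ Set.Ioo a b) (hz : z ∈ Set.Ioo a b) (hyz : 0 < g y) : 0 < g z := by
  by_contra h0
  push_neg at h0
  have hz0 : g z < 0 := lt_of_le_of_ne h0 (h z hz)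
  have hsub : Set.uIcc y z ⊆ Set.Ioo a b := Set.ordConnected_Ioo.uIcc_subset hy hz
  have h0m : (0:ℝ) ∈ Set.uIcc (g y) (g z) := by
    rw [Set.mem_uIcc]; right; exact ⟨hz0.le, hyz.le⟩
  obtain ⟨c, hc, hgc⟩ := intermediate_value_uIcc (hcg.continuousOn) h0m
  exact h c (hsub hc) hgc

theorem sign_of_h (r f : ℝ → ℝ) (x' x'' xs : ℝ) (hlt : x' < x'')
    (hr : ContinuousOn r (Set.Ioo x' x''))
    (hrpos : ∀ x ∈ Set.Ioo x' x'', 0 < r x)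
    (hf1 : Differentiable ℝ f) (hf2 : Differentiable ℝ (deriv f))
    (hode : ∀ x ∈ Set.Ioo x' x'', deriv (deriv f) x + r x * f x = 0)
    (hnt : ∃ x ∈ Set.Ioo x' x'', f x ≠ 0)
    (hz' : deriv f x' = 0) (hz'' : deriv f x'' = 0)
    (hcons : ∀ x ∈ Set.Ioo x' x'', deriv f x ≠ 0)
    (hxs : xs ∈ Set.Ioo x' x'') (hfxs : f xs = 0)
    (huniq : ∀ x ∈ Set.Ioo x' x'', f x = 0 → x = xs) :
    deriv (fun t => f t / deriv f t) xs = 1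
    ∧ (∀ x ∈ Set.Ioo x' xs, f x / deriv f x < 0)
    ∧ (∀ x ∈ Set.Ioo xs x'', 0 < f x / deriv f x) := by
  have hgxs : deriv f xs ≠ 0 := hcons xs hxs
  have hcg : Continuous (deriv f) := hf2.continuous
  -- Part 1: derivative at xs
  have part1 : deriv (fun t => f t / deriv f t) xs = 1 := by
    have hd1 : HasDerivAt f (deriv f xs) xs := (hf1 xs).hasDerivAt
    have hd2 : HasDerivAt (deriv f) (deriv (deriv f) xs) xs := (hf2 xs).hasDerivAt
    rw [show (fun t => f t / deriv f t) = f / deriv f from rfl, (hd1.div hd2 hgxs).deriv, hfxs]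
    field_simp
    ring
  refine ⟨part1, ?_⟩
  rcases lt_or_gt_of_ne hgxs with hneg | hpos
  · -- deriv f < 0 everywhere on Ioo
    have hsign : ∀ x ∈ Set.Ioo x' x'', deriv f x < 0 := by
      intro z hz
      have := same_sign_aux (fun t => -(deriv f t)) hcg.neg x' x''
        (fun t ht => neg_ne_zero.mpr (hcons t ht)) xs z hxs hz (by simpa using hneg)
      simpa using this
    have hanti : StrictAntiOn f (Set.Ioo x' x'') := by
      apply StrictAntiOn.mono (s := Set.Icc x' x'')
      · exact strictAntiOn_of_deriv_neg (convex_Icc _ _) hf1.continuous.continuousOn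
          (by rw [interior_Icc]; exact hsign)
      · exact Set.Ioo_subset_Icc_self
    constructor
    · intro x hx
      have hx2 : x ∈ Set.Ioo x' x'' := ⟨hx.1, hx.2.trans hxs.2⟩
      have : f xs < f x := hanti hx2 hxs hx.2
      rw [hfxs] at this
      exact div_neg_of_pos_of_neg this (hsign x hx2)
    · intro x hx
      have hx2 : x ∈ Set.Ioo x' x'' := ⟨hxs.1.trans hx.1, hx.2⟩
      have : f x < f xs := hanti hxs hx2 hx.1
      rw [hfxs] at this
      exact div_pos_of_neg_of_neg this (hsign x hx2)
  · -- deriv f > 0 everywhere on Ioo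
    have hsign : ∀ x ∈ Set.Ioo x' x'', 0 < deriv f x := fun z hz =>
      same_sign_aux (deriv f) hcg x' x'' hcons xs z hxs hz hpos
    have hmono : StrictMonoOn f (Set.Ioo x' x'') := by
      apply StrictMonoOn.mono (s := Set.Icc x' x'')
      · exact strictMonoOn_of_deriv_pos (convex_Icc _ _) hf1.continuous.continuousOn
          (by rw [interior_Icc]; exact hsign)
      · exact Set.Ioo_subset_Icc_self
    constructor
    · intro x hx
      have hx2 : x ∈ Set.Ioo x' x'' := ⟨hx.1, hx.2.trans hxs.2⟩
      have : f x < f xs := hmono hx2 hxs hx.2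
      rw [hfxs] at this
      exact div_neg_of_neg_of_pos this (hsign x hx2)
    · intro x hx
      have hx2 : x ∈ Set.Ioo x' x'' := ⟨hxs.1.trans hx.1, hx.2⟩
      have : f xs < f x := hmono hxs hx2 hx.1
      rw [hfxs] at this
      exact div_pos this (hsign x hx2)
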